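/- Let R be a commutative ring with 1, n ≥ 2, I ⊆ {1,…,n−1}, and let U_I(R) be the subgroup of SL_n(R) generated by all e_{ij}(r) with i < j not I-connected and r ∈ R (the unipotent radical of P_I(R)). If the standard parabolic subgroup P_I(R) is finitely presented, then U_I(R) is the normal closure in P_I(R) of a finite subset. -/

import Mathlib

/-- A group is finitely presented if it is isomorphic to the quotient of a
finitely generated free group by the normal closure of a finite set. -/
def IsFinitelyPresented (G : Type*) [Group G] : Prop :=
  ∃ (m : ℕ) (S : Finset (FreeGroup (Fin m))),
    Nonempty ((FreeGroup (Fin m) ⧸ Subgroup.normalClosure (S : Set (FreeGroup (Fin m)))) ≃* G)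

/-- The elementary matrix `1 + r·E i j` as an element of `SL_n(R)`. -/
def elemMat {n : ℕ} {R : Type*} [CommRing R] (i j : Fin n) (hij : i ≠ j) (r : R) :
    Matrix.SpecialLinearGroup (Fin n) R :=
  ⟨Matrix.transvection i j r, Matrix.det_transvection_of_ne i j hij r⟩

/-- The set of diagonal matrices in `SL_n(R)`. -/
def diagMats (n : ℕ) (R : Type*) [CommRing R] :
    Set (Matrix.SpecialLinearGroup (Fin n) R) :=
  {g | (g : Matrix (Fin n) (Fin n) R).IsDiag}

/-- For (0-based) indices `i < j` in `Fin n`, the (1-based) pair `(i+1, j+1)` is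
`I`-connected if every simple-root index `k` with `i+1 ≤ k ≤ j` lies in `I`. -/
def IConn {n : ℕ} (I : Set ℕ) (i j : Fin n) : Prop :=
  ∀ k : ℕ, i.val + 1 ≤ k → k ≤ j.val → k ∈ I

/-- Upper elementary matrices `e_{ij}(r)` with `i < j` a `J`-connected pair. -/
def upperElems (n : ℕ) (R : Type*) [CommRing R] (J : Set ℕ) :
    Set (Matrix.SpecialLinearGroup (Fin n) R) :=
  {g | ∃ (i j : Fin n) (h : i < j) (r : R), IConn J i j ∧ g = elemMat i j (ne_of_lt h) r}

/-- All upper elementary matrices `e_{ij}(r)`, `i < j`. -/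
def allUpperElems (n : ℕ) (R : Type*) [CommRing R] :
    Set (Matrix.SpecialLinearGroup (Fin n) R) :=
  {g | ∃ (i j : Fin n) (h : i < j) (r : R), g = elemMat i j (ne_of_lt h) r}

/-- Lower elementary matrices `e_{ji}(r)` with `i < j` an `I`-connected pair. -/
def lowerElems (n : ℕ) (R : Type*) [CommRing R] (I : Set ℕ) :
    Set (Matrix.SpecialLinearGroup (Fin n) R) :=
  {g | ∃ (i j : Fin n) (h : i < j) (r : R), IConn I i j ∧ g = elemMat j i (ne_of_gt h) r}

/-- The standard parabolic subgroup `P_I(R) ≤ SL_n(R)`. -/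
def parabolic (n : ℕ) (R : Type*) [CommRing R] (I : Set ℕ) :
    Subgroup (Matrix.SpecialLinearGroup (Fin n) R) :=
  Subgroup.closure (diagMats n R ∪ allUpperElems n R ∪ lowerElems n R I)

/-- The Levi factor `L_I(R) ≤ SL_n(R)`. -/
def levi (n : ℕ) (R : Type*) [CommRing R] (I : Set ℕ) :
    Subgroup (Matrix.SpecialLinearGroup (Fin n) R) :=
  Subgroup.closure (diagMats n R ∪ upperElems n R I ∪ lowerElems n R I)

/-- `Adj(I)`: simple-root indices not in `I` adjacent to an element of `I`. -/
def adjSet (n : ℕ) (I : Set ℕ) : Set ℕ :=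
  {k | k ∈ Set.Icc 1 (n - 1) ∧ k ∉ I ∧ (k - 1 ∈ I ∨ k + 1 ∈ I)}

/-- `nonAdj(I)`: simple-root indices neither in `I` nor adjacent to `I`. -/
def nonAdjSet (n : ℕ) (I : Set ℕ) : Set ℕ :=
  Set.Icc 1 (n - 1) \ (I ∪ adjSet n I)

/-- The extended Levi factor `LE_I(R)` (for `I ≠ ∅`): generated by the Levi factor
together with all `e_{ij}(r)`, `i < j` a `nonAdj(I)`-connected pair. -/
def extLevi (n : ℕ) (R : Type*) [CommRing R] (I : Set ℕ) :
    Subgroup (Matrix.SpecialLinearGroup (Fin n) R) :=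
  Subgroup.closure (diagMats n R ∪ upperElems n R I ∪ lowerElems n R I ∪
    upperElems n R (nonAdjSet n I))

/-- The unipotent radical U_I(R) of P_I(R): generated by all `e_{ij}(r)` with `i < j`
not an `I`-connected pair. -/
def unipotentRadical (n : ℕ) (R : Type*) [CommRing R] (I : Set ℕ) :
    Subgroup (Matrix.SpecialLinearGroup (Fin n) R) :=
  Subgroup.closure
    {g | ∃ (i j : Fin n) (h : i < j) (r : R), ¬ IConn I i j ∧ g = elemMat i j (ne_of_lt h) r}



open Classical in
noncomputable def piI (I : Set ℕ) (k : ℕ) : ℕ :=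
  ((Finset.Ioc 0 k).filter fun m => m ∉ I).card

open Classical in
lemma piI_add (I : Set ℕ) {i j : ℕ} (h : i ≤ j) :
    piI I j = piI I i + ((Finset.Ioc i j).filter fun m => m ∉ I).card := by
  classical
  rw [piI, piI, ← Finset.card_union_of_disjoint, ← Finset.filter_union,
    Finset.Ioc_union_Ioc_eq_Ioc (Nat.zero_le i) h]
  refine Finset.disjoint_filter_filter ?_
  rw [Finset.disjoint_left]
  intro m hm hm'
  simp only [Finset.mem_Ioc] at hm hm'
  omega

lemma piI_mono (I : Set ℕ) {i j : ℕ} (h : i ≤ j) : piI I i ≤ piI I j := by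
  rw [piI_add I h]; exact Nat.le_add_right _ _

lemma piI_le (I : Set ℕ) (k : ℕ) : piI I k ≤ k := by
  classical
  calc piI I k ≤ (Finset.Ioc 0 k).card := Finset.card_filter_le _ _
  _ = k := by simp [Nat.card_Ioc]

lemma piI_eq_of_iconn {n : ℕ} (I : Set ℕ) {i j : Fin n} (h : i ≤ j) (hc : IConn I i j) :
    piI I j.val = piI I i.val := by
  classical
  rw [piI_add I (show i.val ≤ j.val from h)]
  have : ((Finset.Ioc i.val j.val).filter fun m => m ∉ I) = ∅ := by
    apply Finset.filter_eq_empty_iff.mpr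
    intro m hm
    simp only [Finset.mem_Ioc] at hm
    simp only [not_not]
    exact hc m hm.1 hm.2
  simp [this]

lemma piI_lt_of_not_iconn {n : ℕ} (I : Set ℕ) {i j : Fin n} (h : i < j) (hc : ¬ IConn I i j) :
    piI I i.val < piI I j.val := by
  classical
  rw [piI_add I (show i.val ≤ j.val from h.le)]
  simp only [IConn, not_forall] at hc
  obtain ⟨k, hk1, hk2, hk3⟩ := hc
  have : k ∈ (Finset.Ioc i.val j.val).filter fun m => m ∉ I := by
    simp [Finset.mem_Ioc, hk1, hk2, hk3]; omega
  have := Finset.card_pos.mpr ⟨k, this⟩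
  omega

lemma lt_of_piI_lt {n : ℕ} (I : Set ℕ) {i j : Fin n} (h : piI I i.val < piI I j.val) : i < j := by
  by_contra hc
  push_neg at hc
  exact absurd (piI_mono I (show j.val ≤ i.val from hc)) (by omega)

lemma iconn_of_piI_eq {n : ℕ} (I : Set ℕ) {i j : Fin n} (h : i < j) (he : piI I i.val = piI I j.val) :
    IConn I i j := by
  by_contra hc
  exact absurd he (Nat.ne_of_lt (piI_lt_of_not_iconn I h hc))



section DD
variable {R : Type*} [CommRing R] {n : ℕ} (I : Set ℕ)

/-- block map -/
noncomputable def bI (I : Set ℕ) : Fin n → ℕ := fun i => piI I i.val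

noncomputable def Dm (I : Set ℕ) (M : Matrix (Fin n) (Fin n) R) : Matrix (Fin n) (Fin n) R :=
  Matrix.of fun i j => if piI I i.val = piI I j.val then M i j else 0

lemma Dm_apply (M : Matrix (Fin n) (Fin n) R) (i j : Fin n) :
    Dm I M i j = if piI I i.val = piI I j.val then M i j else 0 := rfl

lemma Dm_one : Dm I (1 : Matrix (Fin n) (Fin n) R) = 1 := by
  ext i j
  rw [Dm_apply]
  by_cases h : i = j
  · simp [h]
  · simp [Matrix.one_apply_ne h]

lemma Dm_idem (M : Matrix (Fin n) (Fin n) R) : Dm I (Dm I M) = Dm I M := by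
  ext i j
  rw [Dm_apply, Dm_apply]
  split <;> simp_all [Dm_apply]

lemma Dm_mul {M N : Matrix (Fin n) (Fin n) R} (hM : M.BlockTriangular (bI I))
    (hN : N.BlockTriangular (bI I)) : Dm I (M * N) = Dm I M * Dm I N := by
  ext i j
  rw [Dm_apply, Matrix.mul_apply]
  by_cases h : piI I i.val = piI I j.val
  · rw [if_pos h, Matrix.mul_apply]
    refine Finset.sum_congr rfl fun k _ => ?_
    rw [Dm_apply, Dm_apply]
    by_cases hk : piI I k.val = piI I i.val
    · rw [if_pos hk.symm, if_pos (hk.trans h)]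
    · rcases lt_or_gt_of_ne hk with hlt | hgt
      · rw [hM (show bI I k < bI I i from hlt), zero_mul,
          if_neg (fun hh => hk hh.symm), zero_mul]
      · rw [hN (show bI I j < bI I k from by simpa [bI, ← h] using hgt), mul_zero,
          if_neg (fun hh => hk hh.symm), zero_mul]
  · rw [if_neg h, Matrix.mul_apply]
    refine (Finset.sum_eq_zero fun k _ => ?_).symm
    rw [Dm_apply, Dm_apply]
    by_cases hk : piI I i.val = piI I k.val
    · rw [if_neg (fun hh => h (hk.trans hh)), mul_zero]
    · rw [if_neg hk, zero_mul]

lemma Dm_eq_one_iff {M : Matrix (Fin n) (Fin n) R} :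
    Dm I M = 1 ↔ ∀ i j : Fin n, piI I i.val = piI I j.val →
      M i j = if i = j then (1 : R) else 0 := by
  constructor
  · intro h i j hij
    have := congrFun (congrFun h i) j
    rw [Dm_apply, if_pos hij] at this
    rw [this, Matrix.one_apply]
  · intro h
    ext i j
    rw [Dm_apply]
    by_cases hij : piI I i.val = piI I j.val
    · rw [if_pos hij, h i j hij, Matrix.one_apply]
    · rw [if_neg hij, Matrix.one_apply_ne]
      rintro rfl; exact hij rfl

lemma BT_transvection_of_le {i j : Fin n} (h : piI I i.val ≤ piI I j.val) (r : R) :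
    (Matrix.transvection i j r).BlockTriangular (bI I) :=
  Matrix.blockTriangular_transvection (show bI I i ≤ bI I j from h) r

lemma BT_coe_inv {A : Matrix.SpecialLinearGroup (Fin n) R}
    (h : (A : Matrix (Fin n) (Fin n) R).BlockTriangular (bI I)) :
    ((A⁻¹ : Matrix.SpecialLinearGroup (Fin n) R) : Matrix (Fin n) (Fin n) R).BlockTriangular (bI I) := by
  haveI : Invertible (A : Matrix (Fin n) (Fin n) R) :=
    A.1.invertibleOfIsUnitDet (by rw [A.2]; exact isUnit_one)
  have h2 := Matrix.blockTriangular_inv_of_blockTriangular h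
  have : (A : Matrix (Fin n) (Fin n) R)⁻¹ = ((A⁻¹ : Matrix.SpecialLinearGroup (Fin n) R) : Matrix (Fin n) (Fin n) R) := by
    rw [Matrix.SpecialLinearGroup.coe_inv, Matrix.inv_def, A.2]
    simp
  rwa [this] at h2

end DD

section Main
variable {R : Type*} [CommRing R] {n : ℕ} (I : Set ℕ)

open Matrix

lemma elemMat_coe {i j : Fin n} (hij : i ≠ j) (r : R) :
    ((elemMat i j hij r : Matrix.SpecialLinearGroup (Fin n) R) : Matrix (Fin n) (Fin n) R) =
      Matrix.transvection i j r := rfl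

lemma transvection_apply_of_ne' {i j a b : Fin n} (hab : a ≠ b) (hne : ¬(a = i ∧ b = j)) (r : R) :
    Matrix.transvection i j r a b = 0 := by
  rw [Matrix.transvection, Matrix.add_apply, Matrix.one_apply_ne hab, zero_add]
  exact Matrix.single_apply_of_ne i j r a b (fun h => hne ⟨h.1.symm, h.2.symm⟩)

lemma Dm_transvection_of_eq {i j : Fin n} (hij : i ≠ j) (h : piI I i.val = piI I j.val) (r : R) :
    Dm I (Matrix.transvection i j r) = Matrix.transvection i j r := by
  ext a b
  rw [Dm_apply]
  by_cases hab : piI I a.val = piI I b.val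
  · rw [if_pos hab]
  · rw [if_neg hab]
    have h1 : a ≠ b := by rintro rfl; exact hab rfl
    have h2 : ¬(a = i ∧ b = j) := by rintro ⟨rfl, rfl⟩; exact hab h
    exact (transvection_apply_of_ne' h1 h2 r).symm

lemma Dm_transvection_of_ne {i j : Fin n} (hij : i ≠ j) (h : piI I i.val ≠ piI I j.val) (r : R) :
    Dm I (Matrix.transvection i j r) = 1 := by
  ext a b
  rw [Dm_apply]
  by_cases hab : piI I a.val = piI I b.val
  · rw [if_pos hab]
    by_cases h1 : a = b
    · subst h1
      rw [Matrix.transvection, Matrix.add_apply]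
      exact add_eq_left.mpr (Matrix.single_apply_of_ne i j r a a (by rintro ⟨rfl, rfl⟩; exact hij rfl))
    · rw [Matrix.one_apply_ne h1, transvection_apply_of_ne' h1 ?_ r]
      rintro ⟨rfl, rfl⟩; exact h hab
  · rw [if_neg hab, Matrix.one_apply_ne (by rintro rfl; exact hab rfl)]

lemma Dm_isDiag {d : Matrix (Fin n) (Fin n) R} (hd : d.IsDiag) : Dm I d = d := by
  ext a b
  rw [Dm_apply]
  by_cases hab : piI I a.val = piI I b.val
  · rw [if_pos hab]
  · rw [if_neg hab, hd (show a ≠ b by rintro rfl; exact hab rfl)]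

lemma isDiag_BT {d : Matrix (Fin n) (Fin n) R} (hd : d.IsDiag) :
    d.BlockTriangular (bI I) := by
  intro a b hab
  exact hd (show a ≠ b by rintro rfl; exact absurd hab (lt_irrefl _))

/-- Every element of the parabolic is block triangular, and its block-diagonal part is
again in the parabolic. -/
lemma parabolic_BT_D : ∀ x : Matrix.SpecialLinearGroup (Fin n) R, x ∈ parabolic n R I →
    (x : Matrix (Fin n) (Fin n) R).BlockTriangular (bI I) ∧
    ∃ y ∈ parabolic n R I, (y : Matrix (Fin n) (Fin n) R) = Dm I (x : Matrix (Fin n) (Fin n) R) := by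
  intro x hx
  refine Subgroup.closure_induction (fun g hg => ?_) ?_ (fun a b _ _ iha ihb => ?_)
    (fun a _ iha => ?_) hx
  · -- generators
    rcases hg with (hg | hg) | hg
    · -- diagonal
      refine ⟨isDiag_BT I hg, g, Subgroup.subset_closure (Or.inl (Or.inl hg)), (Dm_isDiag I hg).symm⟩
    · -- upper elementary
      obtain ⟨i, j, hij, r, rfl⟩ := hg
      have hle : piI I i.val ≤ piI I j.val := piI_mono I (le_of_lt hij)
      refine ⟨BT_transvection_of_le I hle r, ?_⟩
      by_cases heq : piI I i.val = piI I j.val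
      · refine ⟨elemMat i j (ne_of_lt hij) r,
          Subgroup.subset_closure (Or.inl (Or.inr ⟨i, j, hij, r, rfl⟩)), ?_⟩
        exact (Dm_transvection_of_eq I (ne_of_lt hij) heq r).symm
      · refine ⟨1, one_mem _, ?_⟩
        show (1 : Matrix (Fin n) (Fin n) R) = Dm I (Matrix.transvection i j r)
        exact (Dm_transvection_of_ne I (ne_of_lt hij) heq r).symm
    · -- lower elementary, I-connected
      obtain ⟨i, j, hij, r, hconn, rfl⟩ := hg
      have heq : piI I j.val = piI I i.val := piI_eq_of_iconn I (le_of_lt hij) hconn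
      refine ⟨BT_transvection_of_le I (le_of_eq heq) r,
        elemMat j i (ne_of_gt hij) r,
        Subgroup.subset_closure (Or.inr ⟨i, j, hij, r, hconn, rfl⟩), ?_⟩
      exact (Dm_transvection_of_eq I (ne_of_gt hij) heq r).symm
  · -- one
    refine ⟨?_, 1, one_mem _, ?_⟩
    · rw [Matrix.SpecialLinearGroup.coe_one]; exact Matrix.blockTriangular_one
    · rw [Matrix.SpecialLinearGroup.coe_one, Dm_one]
  · -- mul
    obtain ⟨hBTa, ya, hya, hda⟩ := iha
    obtain ⟨hBTb, yb, hyb, hdb⟩ := ihb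
    refine ⟨?_, ya * yb, mul_mem hya hyb, ?_⟩
    · rw [Matrix.SpecialLinearGroup.coe_mul]; exact hBTa.mul hBTb
    · rw [Matrix.SpecialLinearGroup.coe_mul, Matrix.SpecialLinearGroup.coe_mul,
        Dm_mul I hBTa hBTb, hda, hdb]
  · -- inv
    obtain ⟨hBTa, ya, hya, hda⟩ := iha
    have hBTinv : ((a⁻¹ : Matrix.SpecialLinearGroup (Fin n) R) :
        Matrix (Fin n) (Fin n) R).BlockTriangular (bI I) := BT_coe_inv I hBTa
    refine ⟨hBTinv, ya⁻¹, inv_mem hya, ?_⟩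
    have h1 : Dm I ((a⁻¹ : Matrix.SpecialLinearGroup (Fin n) R) : Matrix (Fin n) (Fin n) R) *
        Dm I (a : Matrix (Fin n) (Fin n) R) = 1 := by
      rw [← Dm_mul I hBTinv hBTa, ← Matrix.SpecialLinearGroup.coe_mul, inv_mul_cancel,
        Matrix.SpecialLinearGroup.coe_one, Dm_one]
    have h2 : Dm I (a : Matrix (Fin n) (Fin n) R) *
        ((ya⁻¹ : Matrix.SpecialLinearGroup (Fin n) R) : Matrix (Fin n) (Fin n) R) = 1 := by
      rw [← hda, ← Matrix.SpecialLinearGroup.coe_mul, mul_inv_cancel,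
        Matrix.SpecialLinearGroup.coe_one]
    exact (left_inv_eq_right_inv h1 h2).symm

/-- Every element of the unipotent radical is block triangular with trivial block-diagonal
part. -/
lemma unipotent_BT_one : ∀ x : Matrix.SpecialLinearGroup (Fin n) R, x ∈ unipotentRadical n R I →
    (x : Matrix (Fin n) (Fin n) R).BlockTriangular (bI I) ∧
    Dm I (x : Matrix (Fin n) (Fin n) R) = 1 := by
  intro x hx
  refine Subgroup.closure_induction (fun g hg => ?_) ?_ (fun a b _ _ iha ihb => ?_)
    (fun a _ iha => ?_) hx
  · obtain ⟨i, j, hij, r, hnc, rfl⟩ := hg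
    have hlt : piI I i.val < piI I j.val := piI_lt_of_not_iconn I hij hnc
    exact ⟨BT_transvection_of_le I (le_of_lt hlt) r,
      Dm_transvection_of_ne I (ne_of_lt hij) (ne_of_lt hlt) r⟩
  · refine ⟨?_, ?_⟩
    · rw [Matrix.SpecialLinearGroup.coe_one]; exact Matrix.blockTriangular_one
    · rw [Matrix.SpecialLinearGroup.coe_one, Dm_one]
  · obtain ⟨hBTa, hda⟩ := iha
    obtain ⟨hBTb, hdb⟩ := ihb
    refine ⟨?_, ?_⟩
    · rw [Matrix.SpecialLinearGroup.coe_mul]; exact hBTa.mul hBTb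
    · rw [Matrix.SpecialLinearGroup.coe_mul, Dm_mul I hBTa hBTb, hda, hdb, one_mul]
  · obtain ⟨hBTa, hda⟩ := iha
    have hBTinv := BT_coe_inv I hBTa
    refine ⟨hBTinv, ?_⟩
    have h1 : Dm I ((a⁻¹ : Matrix.SpecialLinearGroup (Fin n) R) : Matrix (Fin n) (Fin n) R) *
        Dm I (a : Matrix (Fin n) (Fin n) R) = 1 := by
      rw [← Dm_mul I hBTinv hBTa, ← Matrix.SpecialLinearGroup.coe_mul, inv_mul_cancel,
        Matrix.SpecialLinearGroup.coe_one, Dm_one]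
    rwa [hda, mul_one] at h1

end Main

section Gen
variable {R : Type*} [CommRing R] {n : ℕ} (I : Set ℕ)

lemma mem_unipotent_aux (d : ℕ) : ∀ ℓ : ℕ, 1 ≤ ℓ → n ≤ ℓ + d →
    ∀ g : Matrix.SpecialLinearGroup (Fin n) R,
    (∀ i j : Fin n, piI I j.val < piI I i.val + ℓ →
      (g : Matrix (Fin n) (Fin n) R) i j = if i = j then 1 else 0) →
    g ∈ unipotentRadical n R I := by
  induction d with
  | zero =>
    intro ℓ hℓ1 hℓn g hC
    have hg1 : g = 1 := by
      apply Subtype.ext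
      ext i j
      rw [Matrix.SpecialLinearGroup.coe_one, Matrix.one_apply]
      exact hC i j (by have h1 := piI_le I j.val; have h2 := j.isLt; omega)
    rw [hg1]; exact one_mem _
  | succ d ih =>
    intro ℓ hℓ1 hℓn g hC
    classical
    suffices h : ∀ T : Finset (Fin n × Fin n), ∀ g : Matrix.SpecialLinearGroup (Fin n) R,
        (∀ i j : Fin n, piI I j.val < piI I i.val + ℓ →
          (g : Matrix (Fin n) (Fin n) R) i j = if i = j then 1 else 0) →
        (∀ q : Fin n × Fin n, piI I q.2.val = piI I q.1.val + ℓ → q ∉ T →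
          (g : Matrix (Fin n) (Fin n) R) q.1 q.2 = 0) →
        g ∈ unipotentRadical n R I by
      exact h Finset.univ g hC (fun p _ hp => absurd (Finset.mem_univ p) hp)
    intro T
    induction T using Finset.induction_on with
    | empty =>
      intro g hC hz
      refine ih (ℓ + 1) (by omega) (by omega) g ?_
      intro i j hlt
      by_cases hcase : piI I j.val < piI I i.val + ℓ
      · exact hC i j hcase
      · have hgap : piI I j.val = piI I i.val + ℓ := by omega
        rw [hz (i, j) hgap (Finset.notMem_empty _), if_neg (by rintro rfl; omega)]
    | @insert p T hpT ih2 =>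
      obtain ⟨i, j⟩ := p
      intro g hC hz
      by_cases hgap : piI I j.val = piI I i.val + ℓ
      · have hij : i < j := lt_of_piI_lt I (by omega)
        have hnc : ¬ IConn I i j := fun hc => by
          have := piI_eq_of_iconn I (le_of_lt hij) hc; omega
        set c : R := (g : Matrix (Fin n) (Fin n) R) i j with hcdef
        set g' := g * elemMat i j (ne_of_lt hij) (-c) with hg'def
        have hcoe : (g' : Matrix (Fin n) (Fin n) R) =
            (g : Matrix (Fin n) (Fin n) R) * Matrix.transvection i j (-c) := rfl
        have he1 : ∀ a b : Fin n, b ≠ j →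
            (g' : Matrix (Fin n) (Fin n) R) a b = (g : Matrix (Fin n) (Fin n) R) a b := by
          intro a b hb
          rw [hcoe, Matrix.mul_transvection_apply_of_ne i j a b hb (-c) _]
        have he2 : ∀ a : Fin n, (g' : Matrix (Fin n) (Fin n) R) a j =
            (g : Matrix (Fin n) (Fin n) R) a j + (-c) * (g : Matrix (Fin n) (Fin n) R) a i := by
          intro a
          rw [hcoe, Matrix.mul_transvection_apply_same i j a (-c) _]
        have hC' : ∀ a b : Fin n, piI I b.val < piI I a.val + ℓ →
            (g' : Matrix (Fin n) (Fin n) R) a b = if a = b then 1 else 0 := by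
          intro a b hab
          by_cases hb : b = j
          · subst hb
            have hai : (g : Matrix (Fin n) (Fin n) R) a i = 0 := by
              rw [hC a i (by omega), if_neg (by rintro rfl; omega)]
            rw [he2 a, hai, mul_zero, add_zero]
            exact hC a b hab
          · rw [he1 a b hb]; exact hC a b hab
        have hz' : ∀ q : Fin n × Fin n, piI I q.2.val = piI I q.1.val + ℓ → q ∉ T →
            (g' : Matrix (Fin n) (Fin n) R) q.1 q.2 = 0 := by
          rintro ⟨a, b⟩ hq hqT
          simp only at hq ⊢
          by_cases hqp : (a, b) = (i, j)
          · rw [Prod.mk.injEq] at hqp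
            obtain ⟨rfl, rfl⟩ := hqp
            have hii : (g : Matrix (Fin n) (Fin n) R) a a = 1 := by
              rw [hC a a (by omega), if_pos rfl]
            rw [he2 a, hii, mul_one, ← hcdef]
            ring
          · by_cases hb : b = j
            · subst hb
              have hane : a ≠ i := by
                intro hh; exact hqp (by rw [hh])
              have hpia : piI I a.val = piI I i.val := by omega
              have hai : (g : Matrix (Fin n) (Fin n) R) a i = 0 := by
                rw [hC a i (by omega), if_neg hane]
              rw [he2 a, hai, mul_zero, add_zero]
              exact hz (a, b) hq (by
                simp only [Finset.mem_insert, not_or]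
                exact ⟨hqp, hqT⟩)
            · rw [he1 a b hb]
              exact hz (a, b) hq (by
                simp only [Finset.mem_insert, not_or]
                exact ⟨hqp, hqT⟩)
        have hg'U : g' ∈ unipotentRadical n R I := ih2 g' hC' hz'
        have hfact : g = g' * elemMat i j (ne_of_lt hij) c := by
          apply Subtype.ext
          show (g : Matrix (Fin n) (Fin n) R) =
            ((g' * elemMat i j (ne_of_lt hij) c : Matrix.SpecialLinearGroup (Fin n) R) :
              Matrix (Fin n) (Fin n) R)
          rw [Matrix.SpecialLinearGroup.coe_mul, hcoe, mul_assoc]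
          rw [show ((elemMat i j (ne_of_lt hij) c : Matrix.SpecialLinearGroup (Fin n) R) :
            Matrix (Fin n) (Fin n) R) = Matrix.transvection i j c from rfl]
          rw [Matrix.transvection_mul_transvection_same i j (ne_of_lt hij) (-c) c,
            neg_add_cancel, Matrix.transvection_zero, mul_one]
        rw [hfact]
        exact mul_mem hg'U (Subgroup.subset_closure ⟨i, j, hij, c, hnc, rfl⟩)
      · refine ih2 g hC ?_
        intro q hq hqT
        refine hz q hq ?_
        simp only [Finset.mem_insert, not_or]
        exact ⟨fun hh => hgap (by rw [hh] at hq; exact hq), hqT⟩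

end Gen

section Retract
variable {G : Type*} [Group G]

lemma ker_eq_normalClosure_retract [DecidableEq G] (T : Finset G) (hT : Subgroup.closure (T : Set G) = ⊤)
    (ρ : G →* G) (hρ : ∀ g, ρ (ρ g) = ρ g) :
    Subgroup.normalClosure ((T.image fun t => t⁻¹ * ρ t : Finset G) : Set G) = ρ.ker := by
  classical
  apply le_antisymm
  · apply Subgroup.normalClosure_le_normal
    intro x hx
    simp only [Finset.coe_image, Set.mem_image, Finset.mem_coe] at hx
    obtain ⟨t, _, rfl⟩ := hx
    have : ρ (t⁻¹ * ρ t) = 1 := by rw [map_mul, map_inv, hρ, inv_mul_cancel]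
    exact this
  · intro g hg
    set N := Subgroup.normalClosure
      ((T.image fun t => t⁻¹ * ρ t : Finset G) : Set G) with hN
    have key : ∀ x : G, x⁻¹ * ρ x ∈ N := by
      intro x
      have hx : x ∈ Subgroup.closure (T : Set G) := hT ▸ Subgroup.mem_top x
      refine Subgroup.closure_induction (fun y hy => ?_) ?_
        (fun y z _ _ ihy ihz => ?_) (fun y _ ihy => ?_) hx
      · refine Subgroup.subset_normalClosure ?_
        simp only [Finset.coe_image, Set.mem_image, Finset.mem_coe]
        exact ⟨y, hy, rfl⟩
      · simpa using one_mem N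
      · have hid : (y * z)⁻¹ * ρ (y * z) =
            (z⁻¹ * (y⁻¹ * ρ y) * z⁻¹⁻¹) * (z⁻¹ * ρ z) := by
          rw [map_mul]; group
        rw [hid]
        exact mul_mem (Subgroup.normalClosure_normal.conj_mem _ ihy z⁻¹) ihz
      · have hid : (y⁻¹)⁻¹ * ρ y⁻¹ = y * (y⁻¹ * ρ y)⁻¹ * y⁻¹ := by
          rw [map_inv]; group
        rw [hid]
        exact Subgroup.normalClosure_normal.conj_mem _ (inv_mem ihy) y
    have h1 := key g
    rw [show ρ g = 1 from hg, mul_one] at h1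
    exact (inv_mem_iff).mp h1

end Retract



/-- If the standard parabolic subgroup P_I(R) ≤ SL_n(R) is finitely presented, then its
unipotent radical U_I(R) is the normal closure in P_I(R) of a finite subset. -/
theorem unipotentRadical_finitely_normally_generated
    {R : Type*} [CommRing R] {n : ℕ} (hn : 2 ≤ n)
    (I : Set ℕ) (hI : I ⊆ Set.Icc 1 (n - 1))
    (h : IsFinitelyPresented ↥(parabolic n R I)) :
    ∃ S : Finset ↥(parabolic n R I),
      (∀ x ∈ S, (x : Matrix.SpecialLinearGroup (Fin n) R) ∈ unipotentRadical n R I) ∧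
      Subgroup.normalClosure (S : Set ↥(parabolic n R I)) =
        (unipotentRadical n R I).comap (parabolic n R I).subtype := by

  classical
  obtain ⟨m, S0, ⟨e⟩⟩ := h
  have hBT : ∀ x : ↥(parabolic n R I),
      ((x : Matrix.SpecialLinearGroup (Fin n) R) : Matrix (Fin n) (Fin n) R).BlockTriangular (bI I) :=
    fun x => (parabolic_BT_D I (x : Matrix.SpecialLinearGroup (Fin n) R) x.2).1
  have hD : ∀ x : ↥(parabolic n R I), ∃ y : ↥(parabolic n R I),
      ((y : Matrix.SpecialLinearGroup (Fin n) R) : Matrix (Fin n) (Fin n) R) =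
        Dm I ((x : Matrix.SpecialLinearGroup (Fin n) R) : Matrix (Fin n) (Fin n) R) := by
    intro x
    obtain ⟨_, y, hy, hyd⟩ := parabolic_BT_D I (x : Matrix.SpecialLinearGroup (Fin n) R) x.2
    exact ⟨⟨y, hy⟩, hyd⟩
  choose ρfun hρfun using hD
  have coe_inj : ∀ a b : ↥(parabolic n R I),
      ((a : Matrix.SpecialLinearGroup (Fin n) R) : Matrix (Fin n) (Fin n) R) =
      ((b : Matrix.SpecialLinearGroup (Fin n) R) : Matrix (Fin n) (Fin n) R) → a = b :=
    fun a b hab => Subtype.ext (Subtype.ext hab)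
  have hmul : ∀ a b : ↥(parabolic n R I), ρfun (a * b) = ρfun a * ρfun b := by
    intro a b
    apply coe_inj
    rw [hρfun]
    have h1 : (((a * b : ↥(parabolic n R I)) : Matrix.SpecialLinearGroup (Fin n) R) :
        Matrix (Fin n) (Fin n) R) =
        ((a : Matrix.SpecialLinearGroup (Fin n) R) : Matrix (Fin n) (Fin n) R) *
        ((b : Matrix.SpecialLinearGroup (Fin n) R) : Matrix (Fin n) (Fin n) R) := rfl
    rw [h1, Dm_mul I (hBT a) (hBT b), ← hρfun, ← hρfun]
    rfl
  let ρ : ↥(parabolic n R I) →* ↥(parabolic n R I) := MonoidHom.mk' ρfun hmul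
  have hρcoe : ∀ x : ↥(parabolic n R I),
      ((ρ x : Matrix.SpecialLinearGroup (Fin n) R) : Matrix (Fin n) (Fin n) R) =
        Dm I ((x : Matrix.SpecialLinearGroup (Fin n) R) : Matrix (Fin n) (Fin n) R) := hρfun
  have hidem : ∀ x, ρ (ρ x) = ρ x := by
    intro x
    apply coe_inj
    rw [hρcoe, hρcoe, Dm_idem]
  -- generating set
  let f : FreeGroup (Fin m) →* ↥(parabolic n R I) :=
    e.toMonoidHom.comp (QuotientGroup.mk' _)
  have hfsurj : Function.Surjective f :=
    e.surjective.comp (QuotientGroup.mk'_surjective _)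
  let T : Finset ↥(parabolic n R I) :=
    Finset.image (fun i => f (FreeGroup.of i)) Finset.univ
  have hT : Subgroup.closure (T : Set ↥(parabolic n R I)) = ⊤ := by
    have h1 : Subgroup.map f ⊤ = ⊤ := by
      rw [← MonoidHom.range_eq_map]
      exact MonoidHom.range_eq_top.mpr hfsurj
    rw [← FreeGroup.closure_range_of (Fin m), MonoidHom.map_closure] at h1
    rw [← h1]
    congr 1
    simp only [T, Finset.coe_image, Finset.coe_univ, Set.image_univ, ← Set.range_comp]
    rfl
  -- the kernel of ρ is the unipotent radical
  have hker : ρ.ker = (unipotentRadical n R I).comap (parabolic n R I).subtype := by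
    ext x
    simp only [MonoidHom.mem_ker, Subgroup.mem_comap]
    constructor
    · intro hx
      have hd1 : Dm I ((x : Matrix.SpecialLinearGroup (Fin n) R) :
          Matrix (Fin n) (Fin n) R) = 1 := by
        rw [← hρcoe x, hx]
        rfl
      have hcc : ∀ i j : Fin n, piI I j.val < piI I i.val + 1 →
          ((x : Matrix.SpecialLinearGroup (Fin n) R) : Matrix (Fin n) (Fin n) R) i j =
            if i = j then 1 else 0 := by
        intro i j hij
        rcases lt_or_eq_of_le (Nat.lt_succ_iff.mp hij) with hlt | heq
        · rw [hBT x (show bI I j < bI I i from hlt), if_neg]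
          rintro rfl; exact absurd hlt (lt_irrefl _)
        · exact (Dm_eq_one_iff I).mp hd1 i j heq.symm
      exact mem_unipotent_aux I n 1 le_rfl (by omega) _ hcc
    · intro hx
      have h2 : Dm I ((x : Matrix.SpecialLinearGroup (Fin n) R) :
          Matrix (Fin n) (Fin n) R) = 1 := (unipotent_BT_one I _ hx).2
      apply coe_inj
      rw [hρcoe, h2]
      rfl
  refine ⟨T.image (fun t => t⁻¹ * ρ t), ?_, ?_⟩
  · intro x hx
    simp only [Finset.mem_image] at hx
    obtain ⟨t, _, rfl⟩ := hx
    have hk : t⁻¹ * ρ t ∈ ρ.ker := by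
      have : ρ (t⁻¹ * ρ t) = 1 := by rw [map_mul, map_inv, hidem, inv_mul_cancel]
      exact this
    rw [hker] at hk
    exact hk
  · rw [ker_eq_normalClosure_retract T hT ρ hidem, hker]
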